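/- Let 0 → M_0 →(i) M →(p) M_1 → 0 be an admissible exact sequence in A, and assume every object of A is Noetherian (satisfies the ascending chain condition on subobjects). Then for each subobject N_0' ⊆ M_0 there exists a universal extension: a subobject N' ⊆ M with N' ∩ M_0 = N_0' such that every subobject of M whose intersection with M_0 is N_0' is contained in N'. Moreover, universal extensions are closed under intersections: if N' and N'' are the universal extensions of N_0' and N_0'' respectively, then N' ∩ N'' is the universal extension of N_0' ∩ N_0''. -/
import Mathlib


set_option maxHeartbeats 1000000
set_option synthInstance.maxHeartbeats 400000

open CategoryTheory CategoryTheory.Limits ZeroObject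

universe v u

attribute [local instance] CategoryTheory.Abelian.hasFiniteBiproducts

variable {A : Type u} [Category.{v} A] [Abelian A] [CategoryTheory.Linear ℚ A]

/-- An Abelian subcategory of `A`: a class of objects containing `0` and closed under
subobjects, quotients and finite direct sums (so that the corresponding full subcategory
is Abelian and the inclusion is exact). -/
structure AbelianSubcat (A : Type u) [Category.{v} A] [Abelian A]
    [CategoryTheory.Linear ℚ A] where
  P : A → Prop
  zero_mem : P 0
  mem_of_mono : ∀ {X Y : A} (f : X ⟶ Y), Mono f → P Y → P X
  mem_of_epi : ∀ {X Y : A} (f : X ⟶ Y), Epi f → P X → P Y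
  mem_biprod : ∀ {X Y : A}, P X → P Y → P (X ⊞ Y)

/-- The two subcategories are orthogonal: `Hom(A_0, A_1) = Hom(A_1, A_0) = 0`. -/
def OrthogonalPair (A0 A1 : AbelianSubcat A) : Prop :=
  (∀ {X Y : A}, A0.P X → A1.P Y → ∀ f : X ⟶ Y, f = 0) ∧
  (∀ {X Y : A}, A1.P X → A0.P Y → ∀ f : X ⟶ Y, f = 0)

/-- An admissible exact sequence `0 → M_0 → M → M_1 → 0` with `M_0 ∈ A_0`, `M_1 ∈ A_1`. -/
structure AdmissibleSeq (A0 A1 : AbelianSubcat A) (M0 M M1 : A)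
    (i : M0 ⟶ M) (p : M ⟶ M1) : Prop where
  zero : i ≫ p = 0
  shortExact : (ShortComplex.mk i p zero).ShortExact
  mem0 : A0.P M0
  mem1 : A1.P M1

/-- The image `p(N)` of a subobject `N ⊆ X` under a morphism `p : X ⟶ Y`. -/
noncomputable def subImg {X Y : A} (p : X ⟶ Y) (N : Subobject X) : Subobject Y :=
  imageSubobject (N.arrow ≫ p)

/-- `N` is the universal lift of the subobject `N₁ ⊆ M_1` along `p : M ↠ M_1`:
`p(N) = N₁`, and every subobject of `M` whose image under `p` is `N₁` contains `N`. -/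
def IsUnivLift {X Y : A} (p : X ⟶ Y) (N1 : Subobject Y) (N : Subobject X) : Prop :=
  subImg p N = N1 ∧ ∀ N' : Subobject X, subImg p N' = N1 → N ≤ N'

/-- `N` is the universal extension of the subobject `N₀ ⊆ M₀sub` (`M₀sub ⊆ M` a given
subobject): `N ∩ M₀sub = N₀`, and every subobject of `M` whose intersection with
`M₀sub` is `N₀` is contained in `N`. -/
def IsUnivExt {X : A} (M0sub : Subobject X) (N0 : Subobject X) (N : Subobject X) : Prop :=
  N ⊓ M0sub = N0 ∧ ∀ N' : Subobject X, N' ⊓ M0sub = N0 → N' ≤ N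

/-- The `m`-th power `M^m` of an object (`M^0 = 0`). -/
noncomputable abbrev pow (M : A) (m : ℕ) : A := ⨁ (fun _ : Fin m => M)

/-- The `n`-th power `f^n : X^n ⟶ Y^n` of a morphism. -/
noncomputable abbrev powMap {X Y : A} (f : X ⟶ Y) (n : ℕ) : pow X n ⟶ pow Y n :=
  biproduct.map (fun _ => f)

/-- The admissible exact sequence `0 → M_0 →i M →p M_1 → 0` is *right saturated* if every
`φ₁ : M_1^n ⟶ M_1^m` has a lift `φ : M^n ⟶ M^m` such that `ker(φ)` is the universal lift
of `ker(φ₁)` along `p^n`. -/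
def RightSaturated {M0 M M1 : A} (i : M0 ⟶ M) (p : M ⟶ M1) : Prop :=
  ∀ (n m : ℕ) (φ1 : pow M1 n ⟶ pow M1 m),
    ∃ φ : pow M n ⟶ pow M m,
      φ ≫ powMap p m = powMap p n ≫ φ1 ∧
      IsUnivLift (powMap p n) (kernelSubobject φ1) (kernelSubobject φ)

/-- The admissible exact sequence `0 → M_0 →i M →p M_1 → 0` is *left saturated* if every
`φ₀ : M_0^n ⟶ M_0^m` has an extension `φ : M^n ⟶ M^m` such that `im(φ)` is the universal
extension of `im(φ₀)` inside `M^m` (relative to the subobject `M_0^m ⊆ M^m`). -/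
def LeftSaturated {M0 M M1 : A} (i : M0 ⟶ M) (p : M ⟶ M1) : Prop :=
  ∀ (n m : ℕ) (φ0 : pow M0 n ⟶ pow M0 m),
    ∃ φ : pow M n ⟶ pow M m,
      powMap i n ≫ φ = φ0 ≫ powMap i m ∧
      IsUnivExt (imageSubobject (powMap i m)) (imageSubobject (φ0 ≫ powMap i m))
        (imageSubobject φ)

lemma imageSubobject_epi_comp_eq {X' X Y : A} (e : X' ⟶ X) [Epi e] (f : X ⟶ Y) :
    imageSubobject (e ≫ f) = imageSubobject f := by
  refine le_antisymm (imageSubobject_comp_le e f) ?_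
  haveI : IsIso (Subobject.ofLE _ _ (imageSubobject_comp_le e f)) :=
    isIso_of_mono_of_epi _
  exact Subobject.le_of_comm (inv (Subobject.ofLE _ _ (imageSubobject_comp_le e f)))
    (by rw [IsIso.inv_comp_eq, Subobject.ofLE_arrow])

lemma sup_eq_imageSubobject_desc {M : A} (N' N'' : Subobject M) :
    N' ⊔ N'' = imageSubobject (biprod.desc N'.arrow N''.arrow) := by
  refine le_antisymm (sup_le ?_ ?_)
    (imageSubobject_le _
      (biprod.desc (Subobject.ofLE _ _ le_sup_left) (Subobject.ofLE _ _ le_sup_right))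
      (by ext <;> simp))
  · exact Subobject.le_of_comm (biprod.inl ≫ factorThruImageSubobject _) (by simp)
  · exact Subobject.le_of_comm (biprod.inr ≫ factorThruImageSubobject _) (by simp)

lemma key_lemma (A0 A1 : AbelianSubcat A) (horth : OrthogonalPair A0 A1)
    {M0 M M1 : A} {i : M0 ⟶ M} {p : M ⟶ M1} (hadm : AdmissibleSeq A0 A1 M0 M M1 i p)
    (N' N'' : Subobject M) (hint : N'' ⊓ imageSubobject i ≤ N') :
    (N' ⊔ N'') ⊓ imageSubobject i ≤ N' := by
  haveI : Mono i := hadm.shortExact.mono_f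
  set M0s := imageSubobject i with hM0s
  set X := (N' ⊔ N'') ⊓ M0s with hX
  set π := cokernel.π N'.arrow with hπ
  -- `X` lies in `A0`
  have hA0M0s : A0.P (M0s : A) :=
    A0.mem_of_mono ((imageSubobjectIso i).hom ≫ (imageMonoIsoSource i).hom)
      inferInstance hadm.mem0
  have hA0X : A0.P (X : A) :=
    A0.mem_of_mono (Subobject.ofLE _ _ (inf_le_right : X ≤ M0s)) inferInstance hA0M0s
  set g := N''.arrow ≫ π with hg
  set h1 := N''.arrow ≫ p with hh1
  -- the kernel of `h1` dies in the cokernel of `N'`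
  have hmk : (Subobject.mk (kernel.ι h1 ≫ N''.arrow)).arrow ≫ π = 0 := by
    have hm : (kernel.ι h1 ≫ N''.arrow) ≫ p = 0 := by
      rw [Category.assoc, ← hh1, kernel.condition]
    obtain ⟨l, hl⟩ := hadm.shortExact.exact.lift' (kernel.ι h1 ≫ N''.arrow) hm
    have h1le : Subobject.mk (kernel.ι h1 ≫ N''.arrow) ≤ M0s :=
      Subobject.mk_le_of_comm (l ≫ factorThruImageSubobject i)
        (by rw [Category.assoc, imageSubobject_arrow_comp]; exact hl)
    have h2le : Subobject.mk (kernel.ι h1 ≫ N''.arrow) ≤ N'' :=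
      Subobject.mk_le_of_comm (kernel.ι h1) rfl
    have h3le : Subobject.mk (kernel.ι h1 ≫ N''.arrow) ≤ N' :=
      le_trans (le_inf h2le h1le) hint
    rw [← Subobject.ofLE_arrow h3le, Category.assoc, hπ, cokernel.condition, comp_zero]
  have hk : kernel.ι h1 ≫ g = 0 := by
    have := (Subobject.underlyingIso (kernel.ι h1 ≫ N''.arrow)).inv ≫= hmk
    rw [← Category.assoc, Subobject.underlyingIso_arrow, comp_zero] at this
    rw [hg, ← Category.assoc]
    exact this
  -- the image of `g` lies in `A1`
  set g₂ := cokernel.desc (kernel.ι h1) g hk with hg₂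
  have hgfac : cokernel.π (kernel.ι h1) ≫ g₂ = g := cokernel.π_desc _ _ _
  have hA1coim : A1.P (Abelian.coimage h1) :=
    A1.mem_of_mono (Abelian.factorThruCoimage h1) inferInstance hadm.mem1
  have hA1img2 : A1.P (imageSubobject g₂ : A) :=
    A1.mem_of_epi (factorThruImageSubobject g₂) inferInstance hA1coim
  have hge : imageSubobject g = imageSubobject g₂ := by
    rw [← hgfac]; exact imageSubobject_epi_comp_eq _ _
  have hA1T : A1.P (imageSubobject g : A) :=
    A1.mem_of_mono (Subobject.isoOfEq _ _ hge).hom inferInstance hA1img2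
  -- the image of `(N' ⊔ N'').arrow ≫ π` is the image of `g`
  set d := biprod.desc N'.arrow N''.arrow with hd
  have hdπ : d ≫ π = biprod.snd ≫ g := by
    ext
    · simp [hd, hg, hπ, cokernel.condition]
    · simp [hd, hg]
  have e1 : factorThruImageSubobject d ≫ ((imageSubobject d).arrow ≫ π) = d ≫ π := by
    rw [← Category.assoc, imageSubobject_arrow_comp]
  have him : imageSubobject ((N' ⊔ N'').arrow ≫ π) = imageSubobject g := by
    rw [sup_eq_imageSubobject_desc N' N'', ← hd]
    calc imageSubobject ((imageSubobject d).arrow ≫ π)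
        = imageSubobject (factorThruImageSubobject d ≫ ((imageSubobject d).arrow ≫ π)) :=
          (imageSubobject_epi_comp_eq _ _).symm
      _ = imageSubobject (biprod.snd ≫ g) := by rw [e1, hdπ]
      _ = imageSubobject g := imageSubobject_epi_comp_eq _ _
  have hXle : imageSubobject (X.arrow ≫ π) ≤ imageSubobject g := by
    rw [← him]
    have hfac : X.arrow ≫ π =
        Subobject.ofLE X (N' ⊔ N'') inf_le_left ≫ ((N' ⊔ N'').arrow ≫ π) := by
      rw [← Category.assoc, Subobject.ofLE_arrow]
    rw [hfac]
    exact imageSubobject_comp_le _ _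
  -- the orthogonality argument
  have hu : factorThruImageSubobject (X.arrow ≫ π) ≫ Subobject.ofLE _ _ hXle = 0 :=
    horth.1 hA0X hA1T _
  have hx0 : X.arrow ≫ π = 0 := by
    rw [← imageSubobject_arrow_comp (X.arrow ≫ π), ← Subobject.ofLE_arrow hXle,
      ← Category.assoc, hu, zero_comp]
  exact Subobject.le_of_comm (Abelian.monoLift N'.arrow X.arrow hx0)
    (Abelian.monoLift_comp _ _ _)

/-- **Lemma (`LEMMAUNIVERSAL` 2).** Let `0 → M_0 →i M →p M_1 → 0` be an admissible exact
sequence and assume every object of `A` is Noetherian (ACC on subobjects). Then every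
subobject `N₀` of `M_0` (viewed as a subobject of `M` contained in `M_0 ⊆ M`) admits a
universal extension `N ⊆ M` (with `N ∩ M_0 = N₀`, containing every subobject with this
property); moreover universal extensions are closed under intersections. -/
theorem exists_universal_extension (A0 A1 : AbelianSubcat A) (horth : OrthogonalPair A0 A1)
    (M0 M M1 : A) (i : M0 ⟶ M) (p : M ⟶ M1) (hadm : AdmissibleSeq A0 A1 M0 M M1 i p)
    (hnoeth : ∀ X : A, WellFoundedGT (Subobject X)) :
    (∀ N0 : Subobject M, N0 ≤ imageSubobject i →
      ∃ N : Subobject M, IsUnivExt (imageSubobject i) N0 N) ∧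
    (∀ (N0 N0' : Subobject M) (N N' : Subobject M),
      IsUnivExt (imageSubobject i) N0 N → IsUnivExt (imageSubobject i) N0' N' →
      IsUnivExt (imageSubobject i) (N0 ⊓ N0') (N ⊓ N')) := by
  set M0s := imageSubobject i with hM0s
  have hstep : ∀ (K K0 N'' : Subobject M), IsUnivExt M0s K0 K → N'' ⊓ M0s ≤ K → N'' ≤ K := by
    intro K K0 N'' hK hle
    have h1 := key_lemma A0 A1 horth hadm K N'' hle
    have h2 : (K ⊔ N'') ⊓ M0s = K0 :=
      le_antisymm (le_trans (le_inf h1 inf_le_right) (le_of_eq hK.1))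
        (by rw [← hK.1]; exact inf_le_inf_right _ le_sup_left)
    exact le_sup_right.trans (hK.2 _ h2)
  constructor
  · intro N0 hN0le
    haveI := hnoeth M
    obtain ⟨Nmax, hmem, hmax⟩ :=
      (IsWellFounded.wf (r := ((· > ·) : Subobject M → Subobject M → Prop))).has_min
        {N' | N' ⊓ M0s = N0} ⟨N0, inf_eq_left.mpr hN0le⟩
    have hmem' : Nmax ⊓ M0s = N0 := hmem
    refine ⟨Nmax, hmem', fun N' hN' => ?_⟩
    have hsup : (Nmax ⊔ N') ⊓ M0s = N0 := by
      refine le_antisymm ?_ ?_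
      · have h1 := key_lemma A0 A1 horth hadm Nmax N'
          (by rw [hN', ← hmem']; exact inf_le_left)
        exact le_trans (le_inf h1 inf_le_right) (le_of_eq hmem')
      · rw [← hmem']; exact inf_le_inf_right _ le_sup_left
    have heq : Nmax ⊔ N' = Nmax := by
      by_contra hne
      exact hmax _ hsup (lt_of_le_of_ne le_sup_left (Ne.symm hne))
    exact le_sup_right.trans heq.le
  · intro N0 N0' N N' hNuniv hN'univ
    constructor
    · rw [inf_inf_distrib_right, hNuniv.1, hN'univ.1]
    · intro N'' hN''
      refine le_inf (hstep N N0 N'' hNuniv ?_) (hstep N' N0' N'' hN'univ ?_)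
      · rw [hN'']
        have : N0 ≤ N := by rw [← hNuniv.1]; exact inf_le_left
        exact inf_le_left.trans this
      · rw [hN'']
        have : N0' ≤ N' := by rw [← hN'univ.1]; exact inf_le_left
        exact inf_le_right.trans this
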